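/- Let $U$ and $Q$ be finite-dimensional complex vector spaces and consider the subset $\widetilde{\mathcal A} = \{u \otimes q + c\,u^2 : u \in U,\ q \in Q,\ c \in \mathbb{C}\} \subset (U \otimes Q) \oplus S^2 U$. Then for $\beta = u \otimes q$ with $u \neq 0$, $q \neq 0$, the set $T_\beta = \{u \otimes q' + u' \otimes q + c\,u^2 : u' \in U,\ q' \in Q,\ c \in \mathbb{C}\}$ is a linear subspace of $(U \otimes Q) \oplus S^2U$ of dimension $\dim U + \dim Q$, and it contains the velocity vector at $t=0$ of every smooth curve in $\widetilde{\mathcal A}$ passing through $\beta$ at $t=0$. -/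

import Mathlib

open Module

/-- Ambient space modelling `(U ⊗ Q) ⊕ S²U` with `U = ℂᵏ`, `Q = ℂᵐ`
(`U ⊗ Q` as `k × m` matrices, `S²U` as (symmetric) `k × k` matrices). -/
abbrev Amb (k m : ℕ) := (Fin k → Fin m → ℂ) × (Fin k → Fin k → ℂ)

/-- `u ⊗ q`. -/
def outer {k m : ℕ} (u : Fin k → ℂ) (q : Fin m → ℂ) : Fin k → Fin m → ℂ :=
  fun i j => u i * q j

/-- `u² ∈ S²U`. -/
def sqv {k : ℕ} (u : Fin k → ℂ) : Fin k → Fin k → ℂ := fun i j => u i * u j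

/-- The parametrizing linear map `(u', q', c) ↦ (u ⊗ q' + u' ⊗ q, c u²)`. -/
def Lmap (k m : ℕ) (u : Fin k → ℂ) (q : Fin m → ℂ) :
    ((Fin k → ℂ) × (Fin m → ℂ) × ℂ) →ₗ[ℂ] Amb k m where
  toFun p := (outer u p.2.1 + outer p.1 q, p.2.2 • sqv u)
  map_add' a b := by
    refine Prod.ext ?_ ?_ <;> funext i j <;>
      simp [outer, sqv, Pi.add_apply, Pi.smul_apply, smul_eq_mul] <;> ring
  map_smul' r a := by
    refine Prod.ext ?_ ?_ <;> funext i j <;>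
      simp [outer, sqv, Pi.add_apply, Pi.smul_apply, smul_eq_mul] <;> ring

/-- at `β = u ⊗ q` (with `u ≠ 0`, `q ≠ 0`) the set
`T_β = {u ⊗ q' + u' ⊗ q + c u²}` is a linear subspace of dimension `dim U + dim Q`
containing the velocity at `t = 0` of every smooth curve in
`Ã = {u ⊗ q + c u²}` passing through `β` (so with `u₀ = u`, `q₀ = q`, `c₀ = 0`). -/
theorem tangent_space_of_vmrt_cone_at_segre_point
    (k m : ℕ) (u : Fin k → ℂ) (q : Fin m → ℂ) (hu : u ≠ 0) (hq : q ≠ 0) :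
    (∃ T : Submodule ℂ (Amb k m),
        (T : Set (Amb k m)) =
          {x | ∃ (u' : Fin k → ℂ) (q' : Fin m → ℂ) (c : ℂ),
                x = (outer u q' + outer u' q, c • sqv u)} ∧
        finrank ℂ T = k + m) ∧
    (∀ (u_ : ℂ → Fin k → ℂ) (q_ : ℂ → Fin m → ℂ) (c_ : ℂ → ℂ)
        (γ : ℂ → Amb k m) (v : Amb k m),
        (∀ t, γ t = (outer (u_ t) (q_ t), c_ t • sqv (u_ t))) →
        u_ 0 = u → q_ 0 = q → c_ 0 = 0 →
        DifferentiableAt ℂ u_ 0 → DifferentiableAt ℂ q_ 0 → DifferentiableAt ℂ c_ 0 →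
        HasDerivAt γ v 0 →
        v ∈ {x : Amb k m | ∃ (u' : Fin k → ℂ) (q' : Fin m → ℂ) (c : ℂ),
                x = (outer u q' + outer u' q, c • sqv u)}) := by
  obtain ⟨i0, hi0⟩ : ∃ i, u i ≠ 0 := by
    by_contra h; push_neg at h; exact hu (funext h)
  obtain ⟨j0, hj0⟩ : ∃ j, q j ≠ 0 := by
    by_contra h; push_neg at h; exact hq (funext h)
  constructor
  · refine ⟨LinearMap.range (Lmap k m u q), ?_, ?_⟩
    · ext x
      simp only [SetLike.mem_coe, LinearMap.mem_range, Set.mem_setOf_eq]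
      constructor
      · rintro ⟨⟨u', q', c⟩, rfl⟩; exact ⟨u', q', c, rfl⟩
      · rintro ⟨u', q', c, rfl⟩; exact ⟨⟨u', q', c⟩, rfl⟩
    · have hker : LinearMap.ker (Lmap k m u q) =
          Submodule.span ℂ {((u, -q, 0) : (Fin k → ℂ) × (Fin m → ℂ) × ℂ)} := by
        apply le_antisymm
        · rintro ⟨u', q', c⟩ hp
          rw [LinearMap.mem_ker] at hp
          have h1 : ∀ i j, u i * q' j + u' i * q j = 0 := by
            intro i j
            have := congrFun (congrFun (congrArg Prod.fst hp) i) j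
            simpa [Lmap, outer] using this
          have h2 : c = 0 := by
            have := congrFun (congrFun (congrArg Prod.snd hp) i0) i0
            simp only [Lmap, LinearMap.coe_mk, AddHom.coe_mk, Pi.smul_apply,
              smul_eq_mul, sqv, Prod.snd_zero, Pi.zero_apply] at this
            have := mul_eq_zero.1 this
            rcases this with h | h
            · exact h
            · exact absurd (mul_self_eq_zero.1 h) hi0
          have hq'c : ∀ j, q' j * u i0 = -(u' i0 * q j) := by
            intro j; linear_combination h1 i0 j
          have hu'c : ∀ i, u' i * u i0 = u' i0 * u i := by
            intro i
            have hcl : (u' i * u i0) * q j0 = (u' i0 * u i) * q j0 := by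
              linear_combination u i0 * h1 i j0 - u i * hq'c j0
            exact mul_right_cancel₀ hj0 hcl
          rw [Submodule.mem_span_singleton]
          refine ⟨u' i0 / u i0, ?_⟩
          refine Prod.ext ?_ (Prod.ext ?_ ?_)
          · funext i
            simp only [Prod.smul_fst, Pi.smul_apply, smul_eq_mul]
            field_simp
            linear_combination - hu'c i
          · funext j
            simp only [Prod.smul_snd, Prod.smul_fst, Pi.smul_apply, Pi.neg_apply,
              smul_eq_mul]
            field_simp
            linear_combination - hq'c j
          · simp [h2]
        · rw [Submodule.span_le, Set.singleton_subset_iff, SetLike.mem_coe,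
            LinearMap.mem_ker]
          refine Prod.ext ?_ ?_ <;> funext i j <;>
            simp [Lmap, outer, sqv]
      have hrank := LinearMap.finrank_range_add_finrank_ker (Lmap k m u q)
      have hdom : finrank ℂ ((Fin k → ℂ) × (Fin m → ℂ) × ℂ) = k + (m + 1) := by
        simp
      have hkerrank : finrank ℂ (LinearMap.ker (Lmap k m u q)) = 1 := by
        rw [hker]
        refine finrank_span_singleton ?_
        intro h
        exact hu (congrArg Prod.fst h)
      rw [hdom, hkerrank] at hrank
      omega
  · intro u_ q_ c_ γ v hγ hu0 hq0 hc0 hdu hdq hdc hv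
    have Hu : HasDerivAt u_ (deriv u_ 0) 0 := hdu.hasDerivAt
    have Hq : HasDerivAt q_ (deriv q_ 0) 0 := hdq.hasDerivAt
    have Hc : HasDerivAt c_ (deriv c_ 0) 0 := hdc.hasDerivAt
    set du := deriv u_ 0 with hdu'
    set dq := deriv q_ 0 with hdq'
    set dc := deriv c_ 0 with hdc'
    have Hui : ∀ i, HasDerivAt (fun t => u_ t i) (du i) 0 := fun i =>
      hasDerivAt_pi.1 Hu i
    have Hqj : ∀ j, HasDerivAt (fun t => q_ t j) (dq j) 0 := fun j =>
      hasDerivAt_pi.1 Hq j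
    have Hf : HasDerivAt (fun t => outer (u_ t) (q_ t))
        (fun i j => du i * q j + u i * dq j) 0 := by
      rw [hasDerivAt_pi]
      intro i
      rw [hasDerivAt_pi]
      intro j
      have := (Hui i).mul (Hqj j)
      simpa only [Pi.mul_def, outer, hu0, hq0] using this
    have Hg : HasDerivAt (fun t => c_ t • sqv (u_ t)) (dc • sqv u) 0 := by
      rw [hasDerivAt_pi]
      intro i
      rw [hasDerivAt_pi]
      intro j
      have := Hc.mul ((Hui i).mul (Hui j))
      simp only [Pi.mul_apply, Pi.mul_def, hu0, hc0, zero_mul, add_zero] at this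
      simpa only [sqv, Pi.smul_apply, smul_eq_mul] using this
    have hγ' : γ = fun t => (outer (u_ t) (q_ t), c_ t • sqv (u_ t)) := funext hγ
    rw [hγ'] at hv
    have hveq : v = ((fun i j => du i * q j + u i * dq j), dc • sqv u) :=
      hv.unique (Hf.prodMk Hg)
    refine ⟨du, dq, dc, ?_⟩
    rw [hveq]
    refine Prod.ext ?_ rfl
    funext i j
    simp only [outer, Pi.add_apply]
    ring
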